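/- Let f : ℝⁿ → ℝ be differentiable with coordinate-wise L-Lipschitz continuous gradient and μ-strongly convex with respect to the Euclidean norm (μ > 0), with minimizer x*. If x^{k+1} = x^k − (1/L)∇_{i_k}f(x^k)e_{i_k} where i_k ∈ argmax_i |∇ᵢf(x^k)| (the Gauss-Southwell rule), then f(x^{k+1}) − f(x*) ≤ (1 − μ/(Ln))(f(x^k) − f(x*)). -/

import Mathlib

open scoped RealInnerProductSpace

/-- classical convergence rate of the Gauss-Southwell rule under
`μ`-strong convexity in the Euclidean norm. -/
theorem gauss_southwell_rate_euclidean {n : ℕ}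
    (f : EuclideanSpace ℝ (Fin n) → ℝ)
    (f' : EuclideanSpace ℝ (Fin n) → EuclideanSpace ℝ (Fin n))
    (hf : ∀ x, HasGradientAt f (f' x) x)
    (L : ℝ) (hL : 0 < L)
    (hlip : ∀ (x : EuclideanSpace ℝ (Fin n)) (α : ℝ) (i : Fin n),
      |f' (x + α • EuclideanSpace.single i 1) i - f' x i| ≤ L * |α|)
    (μ : ℝ) (hμ : 0 < μ)
    (hsc : ∀ x y, f y ≥ f x + ⟪f' x, y - x⟫ + μ / 2 * ‖y - x‖ ^ 2)
    (xs : EuclideanSpace ℝ (Fin n)) (hxs : ∀ y, f xs ≤ f y)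
    (xk : EuclideanSpace ℝ (Fin n)) (ik : Fin n)
    (hik : ∀ j, |f' xk j| ≤ |f' xk ik|)
    (xk1 : EuclideanSpace ℝ (Fin n))
    (hstep : xk1 = xk - ((1 / L) * f' xk ik) • EuclideanSpace.single ik 1) :
    f xk1 - f xs ≤ (1 - μ / (L * n)) * (f xk - f xs) := by
  -- descent lemma along a coordinate
  have key : ∀ (x : EuclideanSpace ℝ (Fin n)) (α : ℝ) (i : Fin n),
      f (x + α • EuclideanSpace.single i 1) ≤ f x + α * f' x i + L / 2 * α ^ 2 := by
    intro x α i
    set v : EuclideanSpace ℝ (Fin n) := α • EuclideanSpace.single i 1 with hv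
    have hcurve : ∀ t : ℝ, x + t • v = x + (t * α) • EuclideanSpace.single i 1 := by
      intro t; rw [hv, smul_smul]
    have hg : ∀ t : ℝ, HasDerivAt (fun t : ℝ => f (x + t • v))
        (α * f' (x + t • v) i) t := by
      intro t
      have hc : HasDerivAt (fun t : ℝ => x + t • v) v t := by
        simpa using ((hasDerivAt_id t).smul_const v).const_add x
      have h2 := (hf (x + t • v)).hasFDerivAt.comp_hasDerivAt t hc
      have h3 : (InnerProductSpace.toDual ℝ _ (f' (x + t • v))) v
          = α * f' (x + t • v) i := by
        simp [hv, InnerProductSpace.toDual_apply_apply, real_inner_smul_right,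
          EuclideanSpace.inner_single_right]
      rw [h3] at h2
      exact h2
    set φ : ℝ → ℝ := fun t =>
      f x + t * (α * f' x i) + L / 2 * α ^ 2 * t ^ 2 - f (x + t • v) with hφ
    have hφ' : ∀ t : ℝ, HasDerivAt φ
        (α * f' x i + L * α ^ 2 * t - α * f' (x + t • v) i) t := by
      intro t
      have hA : HasDerivAt (fun t : ℝ => f x + t * (α * f' x i))
          (α * f' x i) t := by
        simpa using ((hasDerivAt_id t).mul_const (α * f' x i)).const_add (f x)
      have hB : HasDerivAt (fun t : ℝ => L / 2 * α ^ 2 * t ^ 2)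
          (L / 2 * α ^ 2 * (2 * t)) t := by
        simpa using (hasDerivAt_pow 2 t).const_mul (L / 2 * α ^ 2)
      have := (hA.add hB).sub (hg t)
      exact this.congr_deriv (by ring)
    have hderiv_nonneg : ∀ t ∈ Set.Ioo (0:ℝ) 1, 0 ≤ deriv φ t := by
      intro t ht
      rw [(hφ' t).deriv]
      have hl := hlip x (t * α) i
      rw [← hcurve t] at hl
      have habs : |α * f' (x + t • v) i - α * f' x i| ≤ L * α ^ 2 * t := by
        calc |α * f' (x + t • v) i - α * f' x i|
            = |α| * |f' (x + t • v) i - f' x i| := by rw [← abs_mul]; ring_nf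
          _ ≤ |α| * (L * |t * α|) := by
              exact mul_le_mul_of_nonneg_left hl (abs_nonneg _)
          _ = L * α ^ 2 * t := by
              rw [abs_mul, abs_of_pos ht.1]
              rw [← sq_abs α]; ring
      have := abs_le.1 habs
      linarith [this.2]
    have hcont : ContinuousOn φ (Set.Icc 0 1) :=
      (HasDerivAt.continuousOn (fun t _ => hφ' t))
    have hmono : MonotoneOn φ (Set.Icc 0 1) := by
      apply monotoneOn_of_deriv_nonneg (convex_Icc 0 1) hcont
      · intro t ht
        rw [interior_Icc] at ht
        exact (hφ' t).differentiableAt.differentiableWithinAt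
      · intro t ht
        rw [interior_Icc] at ht
        exact hderiv_nonneg t ht
    have h01 := hmono (Set.left_mem_Icc.2 zero_le_one) (Set.right_mem_Icc.2 zero_le_one) zero_le_one
    have hphi0 : φ 0 = 0 := by simp [hφ]
    have hphi1 : φ 1 = f x + α * f' x i + L / 2 * α ^ 2 - f (x + v) := by
      simp only [hφ, one_smul, one_pow, mul_one, one_mul]
    rw [hphi0, hphi1] at h01
    have : x + v = x + α • EuclideanSpace.single i 1 := by rw [hv]
    rw [this] at h01
    linarith
  -- descent step
  set G := f' xk ik with hG
  have hstep' : xk1 = xk + (-(1 / L * G)) • EuclideanSpace.single ik 1 := by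
    rw [hstep, neg_smul, ← sub_eq_add_neg]
  have hdesc : f xk1 ≤ f xk - G ^ 2 / (2 * L) := by
    rw [hstep']
    refine le_trans (key xk (-(1 / L * G)) ik) ?_
    have : f xk + -(1 / L * G) * G + L / 2 * (-(1 / L * G)) ^ 2
        = f xk - G ^ 2 / (2 * L) := by
      field_simp
      ring
    linarith [this.le]
  -- norm squared as sum
  have hnorm : ‖f' xk‖ ^ 2 = ∑ j, (f' xk j) ^ 2 := by
    rw [← real_inner_self_eq_norm_sq, PiLp.inner_apply]
    simp [sq]
  -- Gauss-Southwell bound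
  have hGS : ‖f' xk‖ ^ 2 ≤ n * G ^ 2 := by
    rw [hnorm]
    calc ∑ j, (f' xk j) ^ 2 ≤ ∑ _j : Fin n, G ^ 2 := by
          apply Finset.sum_le_sum
          intro j _
          rw [← sq_abs (f' xk j), ← sq_abs G]
          exact pow_le_pow_left₀ (abs_nonneg _) (hik j) 2
      _ = n * G ^ 2 := by
          rw [Finset.sum_const, Finset.card_univ, Fintype.card_fin, nsmul_eq_mul]
  -- PL inequality from strong convexity
  have hpl : 2 * μ * (f xk - f xs) ≤ ‖f' xk‖ ^ 2 := by
    have h1 := hsc xk xs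
    have hCS : |⟪f' xk, xs - xk⟫| ≤ ‖f' xk‖ * ‖xs - xk‖ := abs_real_inner_le_norm _ _
    have h2 := abs_le.1 hCS
    nlinarith [sq_nonneg (‖f' xk‖ - μ * ‖xs - xk‖), norm_nonneg (xs - xk),
      norm_nonneg (f' xk), hμ]
  have hn : (0:ℝ) < n := by exact_mod_cast Fin.pos ik
  have hΔ : 0 ≤ f xk - f xs := by linarith [hxs xk]
  -- combine
  have hkey : μ / (L * n) * (f xk - f xs) ≤ G ^ 2 / (2 * L) := by
    have h3 : 2 * μ * (f xk - f xs) ≤ n * G ^ 2 := le_trans hpl hGS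
    rw [div_mul_eq_mul_div, div_le_div_iff₀ (by positivity) (by positivity)]
    calc μ * (f xk - f xs) * (2 * L) = L * (2 * μ * (f xk - f xs)) := by ring
      _ ≤ L * (n * G ^ 2) := mul_le_mul_of_nonneg_left h3 hL.le
      _ = G ^ 2 * (L * n) := by ring
  have hexp : (1 - μ / (L * n)) * (f xk - f xs)
      = (f xk - f xs) - μ / (L * n) * (f xk - f xs) := by ring
  linarith [hdesc, hkey]
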